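/- Let δ > 0 and let n : [−1,1] × [−δ,δ] → ℝ² be continuously differentiable with |n(x₁,x₂)| = 1 for all (x₁,x₂), and with n(−1,x₂) = (0,1) and n(1,x₂) = (0,−1) for all x₂ ∈ [−δ,δ]. Then ∫_{−δ}^{δ} ∫_{−1}^{1} |∂_{x₁} n(x₁,x₂)|² dx₁ dx₂ ≥ δπ², and consequently ∫_{−δ}^{δ} ∫_{−1}^{1} |∇n(x₁,x₂)|² dx₁ dx₂ ≥ δπ². -/

import Mathlib

open Real MeasureTheory intervalIntegral Set

lemma norm_sq_eq2 (v : EuclideanSpace ℝ (Fin 2)) : ‖v‖ ^ 2 = v 0 ^ 2 + v 1 ^ 2 := by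
  rw [EuclideanSpace.norm_eq, Real.sq_sqrt (by positivity)]
  simp [Fin.sum_univ_two, sq_abs]

lemma slice_bound (γ γ' : ℝ → EuclideanSpace ℝ (Fin 2))
    (hd : ∀ x ∈ Icc (-1:ℝ) 1, HasDerivWithinAt γ (γ' x) (Icc (-1) 1) x)
    (hc : ContinuousOn γ' (Icc (-1) 1))
    (hunit : ∀ x ∈ Icc (-1:ℝ) 1, ‖γ x‖ = 1)
    (ha : γ (-1) 1 = 1) (hb : γ 1 1 = -1) :
    π ^ 2 / 2 ≤ ∫ x in (-1:ℝ)..1, ‖γ' x‖ ^ 2 := by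
  have hγc : ContinuousOn γ (Icc (-1) 1) := fun x hx => (hd x hx).continuousWithinAt
  -- coordinate derivatives
  have hdi : ∀ (i : Fin 2), ∀ x ∈ Icc (-1:ℝ) 1,
      HasDerivWithinAt (fun y => γ y i) (γ' x i) (Icc (-1) 1) x := by
    intro i x hx
    exact (EuclideanSpace.proj i).hasFDerivAt.comp_hasDerivWithinAt x (hd x hx)
  have hsum : ∀ x ∈ Icc (-1:ℝ) 1, γ x 0 ^ 2 + γ x 1 ^ 2 = 1 := by
    intro x hx
    have := hunit x hx
    rw [← norm_sq_eq2, this]; norm_num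
  -- orthogonality
  have horth : ∀ x ∈ Icc (-1:ℝ) 1, γ x 0 * γ' x 0 + γ x 1 * γ' x 1 = 0 := by
    intro x hx
    have h1 : HasDerivWithinAt (fun y => (γ y 0) ^ 2 + (γ y 1) ^ 2)
        (2 * γ x 0 ^ 1 * γ' x 0 + 2 * γ x 1 ^ 1 * γ' x 1) (Icc (-1) 1) x := by
      have := ((hdi 0 x hx).pow 2).add ((hdi 1 x hx).pow 2)
      refine this.congr_deriv ?_
      norm_num
    have h2 : HasDerivWithinAt (fun y => (γ y 0) ^ 2 + (γ y 1) ^ 2) 0 (Icc (-1) 1) x := by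
      refine (hasDerivWithinAt_const x _ (1:ℝ)).congr (fun y hy => (hsum y hy))
        (hsum x hx)
    have hu : UniqueDiffWithinAt ℝ (Icc (-1:ℝ) 1) x := uniqueDiffOn_Icc (by norm_num) x hx
    have := h1.derivWithin hu
    rw [h2.derivWithin hu] at this
    nlinarith [this]
  -- key identity
  have key : ∀ x ∈ Icc (-1:ℝ) 1, (γ' x 1) ^ 2 = (1 - (γ x 1) ^ 2) * ‖γ' x‖ ^ 2 := by
    intro x hx
    have hs := hsum x hx
    have ho := horth x hx
    have h2 : (γ x 1 * γ' x 1) ^ 2 = (γ x 0 * γ' x 0) ^ 2 := by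
      rw [show γ x 1 * γ' x 1 = -(γ x 0 * γ' x 0) by linarith]; ring
    rw [norm_sq_eq2]
    nlinarith [h2, hs]
  have habs1 : ∀ x ∈ Icc (-1:ℝ) 1, (γ x 1) ^ 2 ≤ 1 := by
    intro x hx; nlinarith [hsum x hx, sq_nonneg (γ x 0)]
  set I := ∫ x in (-1:ℝ)..1, ‖γ' x‖ with hI_def
  have hgcont : ContinuousOn (fun x => ‖γ' x‖) (Icc (-1:ℝ) 1) := hc.norm
  have hIcc_uIcc : uIcc (-1:ℝ) 1 = Icc (-1) 1 := uIcc_of_le (by norm_num)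
  have hgint : IntervalIntegrable (fun x => ‖γ' x‖) volume (-1) 1 :=
    (hgcont.mono (by rw [hIcc_uIcc])).intervalIntegrable
  have hg2int : IntervalIntegrable (fun x => ‖γ' x‖ ^ 2) volume (-1) 1 :=
    ((hgcont.pow 2).mono (by rw [hIcc_uIcc])).intervalIntegrable
  -- step: π ≤ I
  have hπI : π ≤ I := by
    have hstep : ∀ ε ∈ Ioi (0:ℝ), 2 * arcsin (1 / Real.sqrt (1 + ε)) ≤ I := by
      intro ε hε
      rw [mem_Ioi] at hε
      set c := Real.sqrt (1 + ε) with hc_def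
      have hcsq : c ^ 2 = 1 + ε := Real.sq_sqrt (by linarith)
      have hcnn : 0 ≤ c := Real.sqrt_nonneg _
      have hc1 : 1 < c := by nlinarith
      have hc0 : 0 < c := by linarith
      set φ : ℝ → ℝ := fun x => γ' x 1 / Real.sqrt (1 + ε - (γ x 1) ^ 2) with hφ_def
      have hden_pos : ∀ x ∈ Icc (-1:ℝ) 1, 0 < 1 + ε - (γ x 1) ^ 2 := by
        intro x hx; have := habs1 x hx; linarith
      -- derivative of F = arcsin (γ · 1 / c)
      have hder : ∀ x ∈ Icc (-1:ℝ) 1,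
          HasDerivWithinAt (fun y => arcsin (γ y 1 / c)) (φ x) (Icc (-1) 1) x := by
        intro x hx
        have hu2 : (γ x 1 / c) ^ 2 < 1 := by
          rw [div_pow, hcsq]
          rw [div_lt_one (by linarith)]
          have := habs1 x hx; linarith
        have huabs : |γ x 1 / c| < 1 := by
          rw [← Real.sqrt_one, ← Real.sqrt_sq_eq_abs]
          exact Real.sqrt_lt_sqrt (sq_nonneg _) (by linarith)
        have hune : γ x 1 / c ≠ -1 := by
          intro h; rw [h] at huabs; norm_num at huabs
        have hune' : γ x 1 / c ≠ 1 := by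
          intro h; rw [h] at huabs; norm_num at huabs
        have harc := Real.hasDerivAt_arcsin hune hune'
        have hcomp := harc.comp_hasDerivWithinAt x ((hdi 1 x hx).div_const c)
        have h1u : 0 < 1 - (γ x 1 / c) ^ 2 := by linarith
        have hs1 : Real.sqrt (1 + ε - γ x 1 ^ 2) = c * Real.sqrt (1 - (γ x 1 / c) ^ 2) := by
          rw [← Real.sqrt_sq hc0.le, ← Real.sqrt_mul (sq_nonneg c)]
          congr 1
          field_simp
          rw [Real.sq_sqrt (sq_nonneg c), hcsq]
          ring
        have hsne : Real.sqrt (1 - (γ x 1 / c) ^ 2) ≠ 0 := (Real.sqrt_pos.2 h1u).ne'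
        have heq : φ x = 1 / Real.sqrt (1 - (γ x 1 / c) ^ 2) * (γ' x 1 / c) := by
          show γ' x 1 / Real.sqrt (1 + ε - γ x 1 ^ 2) = _
          rw [hs1, one_div_mul_eq_div, div_div]
        rw [heq]
        exact hcomp
      -- continuity of φ
      have hφcont : ContinuousOn φ (Icc (-1:ℝ) 1) := by
        apply ContinuousOn.div
        · exact (EuclideanSpace.proj (1 : Fin 2)).continuous.comp_continuousOn hc
        · apply ContinuousOn.sqrt
          exact (continuousOn_const.sub
            (((EuclideanSpace.proj (1 : Fin 2)).continuous.comp_continuousOn hγc).pow 2))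
        · intro x hx
          exact (Real.sqrt_pos.2 (hden_pos x hx)).ne'
      have hφint : IntervalIntegrable φ volume (-1) 1 :=
        (hφcont.mono (by rw [hIcc_uIcc])).intervalIntegrable
      -- FTC
      have hFcont : ContinuousOn (fun y => arcsin (γ y 1 / c)) (Icc (-1:ℝ) 1) :=
        Real.continuous_arcsin.comp_continuousOn
          (((EuclideanSpace.proj (1 : Fin 2)).continuous.comp_continuousOn hγc).div_const c)
      have hderiv' : ∀ x ∈ Ioo (-1:ℝ) 1,
          HasDerivWithinAt (fun y => arcsin (γ y 1 / c)) (φ x) (Ioi x) x := by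
        intro x hx
        have hx' : Icc (-1:ℝ) 1 ∈ nhds x := Icc_mem_nhds hx.1 hx.2
        exact ((hder x (Ioo_subset_Icc_self hx)).hasDerivAt hx').hasDerivWithinAt
      have hftc := integral_eq_sub_of_hasDeriv_right_of_le (a := (-1:ℝ)) (b := 1)
        (f := fun y => arcsin (γ y 1 / c)) (f' := φ) (by norm_num) hFcont hderiv' hφint
      simp only [hb, ha] at hftc
      have harc_eq : arcsin (-1 / c) - arcsin (1 / c) = -(2 * arcsin (1 / c)) := by
        rw [show (-1 : ℝ) / c = -(1 / c) by ring, Real.arcsin_neg]; ring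
      rw [harc_eq] at hftc
      -- |φ| ≤ ‖γ'‖
      have hφle : ∀ x ∈ Icc (-1:ℝ) 1, |φ x| ≤ ‖γ' x‖ := by
        intro x hx
        have hden := hden_pos x hx
        have hkey := key x hx
        have h1 : φ x ^ 2 ≤ ‖γ' x‖ ^ 2 := by
          rw [hφ_def]
          rw [div_pow, Real.sq_sqrt hden.le]
          rw [div_le_iff₀ hden]
          have h2 : (γ x 1)^2 ≤ 1 := habs1 x hx
          nlinarith [sq_nonneg (‖γ' x‖), hkey]
        calc |φ x| = Real.sqrt (φ x ^ 2) := (Real.sqrt_sq_eq_abs _).symm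
          _ ≤ Real.sqrt (‖γ' x‖ ^ 2) := Real.sqrt_le_sqrt h1
          _ = ‖γ' x‖ := Real.sqrt_sq (norm_nonneg _)
      have habsint : IntervalIntegrable (fun x => |φ x|) volume (-1) 1 :=
        (hφcont.abs.mono (by rw [hIcc_uIcc])).intervalIntegrable
      have h3 : 2 * arcsin (1 / c) = -(∫ x in (-1:ℝ)..1, φ x) := by rw [hftc]; ring
      have h4 : -(∫ x in (-1:ℝ)..1, φ x) ≤ |∫ x in (-1:ℝ)..1, φ x| := neg_le_abs _
      have h5 : |∫ x in (-1:ℝ)..1, φ x| ≤ ∫ x in (-1:ℝ)..1, |φ x| :=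
        intervalIntegral.abs_integral_le_integral_abs (by norm_num)
      have h6 : (∫ x in (-1:ℝ)..1, |φ x|) ≤ I :=
        intervalIntegral.integral_mono_on (by norm_num) habsint hgint hφle
      linarith
    have htend : Filter.Tendsto (fun ε => 2 * arcsin (1 / Real.sqrt (1 + ε)))
        (nhdsWithin 0 (Ioi 0)) (nhds π) := by
      have hca : ContinuousAt (fun ε : ℝ => 2 * arcsin (1 / Real.sqrt (1 + ε))) 0 := by
        apply ContinuousAt.mul continuousAt_const
        apply Real.continuous_arcsin.continuousAt.comp
        apply ContinuousAt.div continuousAt_const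
        · exact (Real.continuous_sqrt.comp (continuous_const.add continuous_id)).continuousAt
        · simp
      have heval : π = 2 * arcsin (1 / Real.sqrt (1 + (0:ℝ))) := by
        rw [show (1:ℝ) + 0 = 1 by norm_num, Real.sqrt_one, div_one, Real.arcsin_one]
        ring
      rw [heval]
      exact hca.continuousWithinAt (s := Ioi (0:ℝ))
    exact le_of_tendsto htend (Filter.eventually_of_mem self_mem_nhdsWithin hstep)
  -- Cauchy-Schwarz
  have hInn : 0 ≤ I := le_trans Real.pi_nonneg hπI
  have h0 : 0 ≤ ∫ x in (-1:ℝ)..1, (‖γ' x‖ - I / 2) ^ 2 :=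
    intervalIntegral.integral_nonneg (by norm_num) (fun x _ => sq_nonneg _)
  have hexp : ∫ x in (-1:ℝ)..1, (‖γ' x‖ - I / 2) ^ 2 =
      (∫ x in (-1:ℝ)..1, ‖γ' x‖ ^ 2) - I * I + (I / 2) ^ 2 * 2 := by
    have e1 : ∀ x, (‖γ' x‖ - I / 2) ^ 2 = ‖γ' x‖ ^ 2 - I * ‖γ' x‖ + (I / 2) ^ 2 := by
      intro x; ring
    simp_rw [e1]
    rw [intervalIntegral.integral_add (hg2int.sub (hgint.const_mul I)) intervalIntegrable_const,
        intervalIntegral.integral_sub hg2int (hgint.const_mul I),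
        intervalIntegral.integral_const_mul, intervalIntegral.integral_const]
    simp
    ring
  have hπ2 : π ^ 2 ≤ I ^ 2 := by
    nlinarith [Real.pi_nonneg]
  rw [hexp] at h0
  nlinarith
lemma slice_cont' {E : Type*} [TopologicalSpace E] {a b c d : ℝ} (f : ℝ → ℝ → E)
    (hf : ContinuousOn (fun p : ℝ × ℝ => f p.1 p.2) (Icc a b ×ˢ Icc c d))
    {x₂ : ℝ} (hx₂ : x₂ ∈ Icc c d) :
    ContinuousOn (fun x₁ => f x₁ x₂) (Icc a b) := by
  have hmk : Continuous (fun x : ℝ => (x, x₂)) := continuous_id.prodMk continuous_const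
  have := hf.comp hmk.continuousOn
    (fun x (hx : x ∈ Icc a b) => Set.mk_mem_prod hx hx₂)
  exact this

lemma param_cont {δ : ℝ} (f : ℝ → ℝ → ℝ)
    (hf : ContinuousOn (fun p : ℝ × ℝ => f p.1 p.2) (Icc (-1:ℝ) 1 ×ˢ Icc (-δ) δ)) :
    ContinuousOn (fun x₂ => ∫ x₁ in (-1:ℝ)..1, f x₁ x₂) (Icc (-δ) δ) := by
  obtain ⟨C, hC⟩ := (isCompact_Icc.prod isCompact_Icc).exists_bound_of_continuousOn hf
  have huIoc : Set.uIoc (-1:ℝ) 1 = Ioc (-1) 1 := uIoc_of_le (by norm_num)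
  intro x₀ hx₀
  apply intervalIntegral.continuousWithinAt_of_dominated_interval (bound := fun _ => C)
  · filter_upwards [self_mem_nhdsWithin] with x₂ hx₂
    rw [huIoc]
    refine ContinuousOn.aestronglyMeasurable ?_ measurableSet_Ioc
    refine ContinuousOn.mono ?_ Ioc_subset_Icc_self
    exact slice_cont' f hf hx₂
  · filter_upwards [self_mem_nhdsWithin] with x₂ hx₂
    refine MeasureTheory.ae_of_all _ (fun t ht => ?_)
    rw [huIoc] at ht
    exact hC (t, x₂) ⟨Ioc_subset_Icc_self ht, hx₂⟩
  · exact intervalIntegrable_const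
  · refine MeasureTheory.ae_of_all _ (fun t ht => ?_)
    rw [huIoc] at ht
    exact (hf (t, x₀) ⟨Ioc_subset_Icc_self ht, hx₀⟩).comp
      ((continuous_const.prodMk continuous_id).continuousWithinAt)
      (fun x₂ hx₂ => ⟨Ioc_subset_Icc_self ht, hx₂⟩)

theorem stmt15 (δ : ℝ) (hδ : 0 < δ)
    (n d1 d2 : ℝ → ℝ → EuclideanSpace ℝ (Fin 2))
    (hd1 : ∀ x₁ ∈ Set.Icc (-1 : ℝ) 1, ∀ x₂ ∈ Set.Icc (-δ) δ,
      HasDerivWithinAt (fun y => n y x₂) (d1 x₁ x₂) (Set.Icc (-1) 1) x₁)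
    (hd2 : ∀ x₁ ∈ Set.Icc (-1 : ℝ) 1, ∀ x₂ ∈ Set.Icc (-δ) δ,
      HasDerivWithinAt (fun y => n x₁ y) (d2 x₁ x₂) (Set.Icc (-δ) δ) x₂)
    (hc1 : ContinuousOn (fun p : ℝ × ℝ => d1 p.1 p.2) (Set.Icc (-1) 1 ×ˢ Set.Icc (-δ) δ))
    (hc2 : ContinuousOn (fun p : ℝ × ℝ => d2 p.1 p.2) (Set.Icc (-1) 1 ×ˢ Set.Icc (-δ) δ))
    (hunit : ∀ x₁ ∈ Set.Icc (-1 : ℝ) 1, ∀ x₂ ∈ Set.Icc (-δ) δ, ‖n x₁ x₂‖ = 1)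
    (hleft : ∀ x₂ ∈ Set.Icc (-δ) δ, n (-1) x₂ 0 = 0 ∧ n (-1) x₂ 1 = 1)
    (hright : ∀ x₂ ∈ Set.Icc (-δ) δ, n 1 x₂ 0 = 0 ∧ n 1 x₂ 1 = -1) :
    (δ * Real.pi ^ 2 ≤ ∫ x₂ in (-δ)..δ, ∫ x₁ in (-1 : ℝ)..1, ‖d1 x₁ x₂‖ ^ 2) ∧
    (δ * Real.pi ^ 2 ≤
      ∫ x₂ in (-δ)..δ, ∫ x₁ in (-1 : ℝ)..1, (‖d1 x₁ x₂‖ ^ 2 + ‖d2 x₁ x₂‖ ^ 2)) := by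
  have hδδ : (-δ : ℝ) ≤ δ := by linarith
  have huIccδ : uIcc (-δ) δ = Icc (-δ) δ := uIcc_of_le hδδ
  have hIcc_uIcc : uIcc (-1:ℝ) 1 = Icc (-1) 1 := uIcc_of_le (by norm_num)
  -- slice bound
  have hslice : ∀ x₂ ∈ Icc (-δ) δ, π ^ 2 / 2 ≤ ∫ x₁ in (-1:ℝ)..1, ‖d1 x₁ x₂‖ ^ 2 := by
    intro x₂ hx₂
    refine slice_bound (fun x₁ => n x₁ x₂) (fun x₁ => d1 x₁ x₂)
      (fun x hx => hd1 x hx x₂ hx₂) ?_ (fun x hx => hunit x hx x₂ hx₂)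
      (hleft x₂ hx₂).2 (hright x₂ hx₂).2
    exact slice_cont' d1 hc1 hx₂
  -- continuity of the two parametric integrals
  have hf1 : ContinuousOn (fun p : ℝ × ℝ => ‖d1 p.1 p.2‖ ^ 2)
      (Icc (-1:ℝ) 1 ×ˢ Icc (-δ) δ) := hc1.norm.pow 2
  have hf12 : ContinuousOn (fun p : ℝ × ℝ => ‖d1 p.1 p.2‖ ^ 2 + ‖d2 p.1 p.2‖ ^ 2)
      (Icc (-1:ℝ) 1 ×ˢ Icc (-δ) δ) := (hc1.norm.pow 2).add (hc2.norm.pow 2)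
  have H1cont : ContinuousOn (fun x₂ => ∫ x₁ in (-1:ℝ)..1, ‖d1 x₁ x₂‖ ^ 2) (Icc (-δ) δ) :=
    param_cont (fun x₁ x₂ => ‖d1 x₁ x₂‖ ^ 2) hf1
  have H12cont : ContinuousOn
      (fun x₂ => ∫ x₁ in (-1:ℝ)..1, (‖d1 x₁ x₂‖ ^ 2 + ‖d2 x₁ x₂‖ ^ 2)) (Icc (-δ) δ) :=
    param_cont (fun x₁ x₂ => ‖d1 x₁ x₂‖ ^ 2 + ‖d2 x₁ x₂‖ ^ 2) hf12
  have H1int : IntervalIntegrable (fun x₂ => ∫ x₁ in (-1:ℝ)..1, ‖d1 x₁ x₂‖ ^ 2)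
      volume (-δ) δ := (H1cont.mono (by rw [huIccδ])).intervalIntegrable
  have H12int : IntervalIntegrable
      (fun x₂ => ∫ x₁ in (-1:ℝ)..1, (‖d1 x₁ x₂‖ ^ 2 + ‖d2 x₁ x₂‖ ^ 2))
      volume (-δ) δ := (H12cont.mono (by rw [huIccδ])).intervalIntegrable
  -- part 1
  have hpart1 : δ * π ^ 2 ≤ ∫ x₂ in (-δ)..δ, ∫ x₁ in (-1:ℝ)..1, ‖d1 x₁ x₂‖ ^ 2 := by
    have hmono := intervalIntegral.integral_mono_on hδδ
      (_root_.intervalIntegrable_const (c := π ^ 2 / 2)) H1int hslice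
    rw [intervalIntegral.integral_const, smul_eq_mul] at hmono
    linarith
  refine ⟨hpart1, ?_⟩
  -- part 2
  have hmono2 : ∀ x₂ ∈ Icc (-δ) δ,
      (∫ x₁ in (-1:ℝ)..1, ‖d1 x₁ x₂‖ ^ 2) ≤
      ∫ x₁ in (-1:ℝ)..1, (‖d1 x₁ x₂‖ ^ 2 + ‖d2 x₁ x₂‖ ^ 2) := by
    intro x₂ hx₂
    have hint1 : IntervalIntegrable (fun x₁ => ‖d1 x₁ x₂‖ ^ 2) volume (-1) 1 := by
      refine ContinuousOn.intervalIntegrable ?_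
      rw [hIcc_uIcc]
      exact slice_cont' (fun x₁ x₂ => ‖d1 x₁ x₂‖ ^ 2) hf1 hx₂
    have hint12 : IntervalIntegrable
        (fun x₁ => ‖d1 x₁ x₂‖ ^ 2 + ‖d2 x₁ x₂‖ ^ 2) volume (-1) 1 := by
      refine ContinuousOn.intervalIntegrable ?_
      rw [hIcc_uIcc]
      exact slice_cont' (fun x₁ x₂ => ‖d1 x₁ x₂‖ ^ 2 + ‖d2 x₁ x₂‖ ^ 2) hf12 hx₂
    exact intervalIntegral.integral_mono_on (by norm_num) hint1 hint12
      (fun x _ => by nlinarith [sq_nonneg ‖d2 x x₂‖])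
  calc δ * π ^ 2 ≤ ∫ x₂ in (-δ)..δ, ∫ x₁ in (-1:ℝ)..1, ‖d1 x₁ x₂‖ ^ 2 := hpart1
    _ ≤ _ := intervalIntegral.integral_mono_on hδδ H1int H12int hmono2
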